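/- A decision-conflict logit ρ with representation (u,D) is a reciprocal-differences model — i.e. u is injective and there exists λ > 0 with D({a,b}) = λ/|u(a) − u(b)| for all distinct a, b ∈ X — if and only if ρ satisfies axioms A7 and A8. -/

import Mathlib

open Finset

variable {X : Type*} [Fintype X] [DecidableEq X]

/-- The probability of choosing the outside option (deferring) at menu `A`. -/
noncomputable def defer (ρ : Finset X → X → ℝ) (A : Finset X) : ℝ :=
  1 - ∑ a ∈ A, ρ A a

/-- `ρ` is a random non-forced choice model on `X`. -/
def IsRNFC (ρ : Finset X → X → ℝ) : Prop :=
  ∀ A : Finset X, A.Nonempty →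
    (∀ a ∈ A, 0 ≤ ρ A a ∧ ρ A a ≤ 1) ∧
    (∀ a, a ∉ A → ρ A a = 0) ∧
    (∑ a ∈ A, ρ A a) ≤ 1

/-- `ρ` is a decision-conflict logit with representation `(u, D)`. -/
def IsDCL (ρ : Finset X → X → ℝ) (u : X → ℝ) (D : Finset X → ℝ) : Prop :=
  (∀ a, 0 < u a) ∧
  (∀ A : Finset X, A.Nonempty → 0 ≤ D A ∧ (D A = 0 ↔ A.card = 1)) ∧
  (∀ A : Finset X, A.Nonempty → ∀ a ∈ A, ρ A a = u a / ((∑ b ∈ A, u b) + D A))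

/-- Axiom A7 (Active-Choice Asymmetry). -/
def A7 (ρ : Finset X → X → ℝ) : Prop :=
  ∀ A : Finset X, A.Nonempty → ∀ a ∈ A, ∀ b ∈ A, a ≠ b → ρ A a ≠ ρ A b

/-- Axiom A8 (Odds-Ratio Proportionality). -/
def A8 (ρ : Finset X → X → ℝ) : Prop :=
  ∀ a b c : X, a ≠ b → b ≠ c → a ≠ c →
    ρ {a, b} a > ρ {a, b} b → ρ {b, c} b > ρ {b, c} c → ρ {a, c} a > ρ {a, c} c →
    ((defer ρ {a, b} / ρ {a, b} b) / (defer ρ {b, c} / ρ {b, c} b)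
        = (defer ρ {a, b} / ρ {a, b} a - defer ρ {a, c} / ρ {a, c} a)
            / (defer ρ {a, c} / ρ {a, c} a)) ∧
    ((defer ρ {a, b} / ρ {a, b} a) / (defer ρ {a, c} / ρ {a, c} a)
        = ((ρ {a, c} a - ρ {a, c} c) / ρ {a, c} a)
            / ((ρ {a, b} a - ρ {a, b} b) / ρ {a, b} a))

set_option linter.unusedVariables false
set_option linter.unusedSectionVars false

section Aux
variable {ρ : Finset X → X → ℝ} {u : X → ℝ} {D : Finset X → ℝ}

lemma pair_ne {a b : X} (hab : a ≠ b) : ({a, b} : Finset X).Nonempty := ⟨a, mem_insert_self _ _⟩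

lemma D_pair_pos (h : IsDCL ρ u D) {a b : X} (hab : a ≠ b) : 0 < D {a, b} := by
  obtain ⟨h1, h2⟩ := h.2.1 {a, b} (pair_ne hab)
  refine lt_of_le_of_ne h1 (Ne.symm fun h0 => ?_)
  have := h2.mp h0
  rw [card_pair hab] at this
  omega

lemma den_pair_pos (h : IsDCL ρ u D) {a b : X} (hab : a ≠ b) :
    0 < u a + u b + D {a, b} := by
  have := D_pair_pos h hab
  have := h.1 a; have := h.1 b; linarith

lemma rho_pair_left (h : IsDCL ρ u D) {a b : X} (hab : a ≠ b) :
    ρ {a, b} a = u a / (u a + u b + D {a, b}) := by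
  rw [h.2.2 {a, b} (pair_ne hab) a (mem_insert_self _ _), Finset.sum_pair hab]

lemma rho_pair_right (h : IsDCL ρ u D) {a b : X} (hab : a ≠ b) :
    ρ {a, b} b = u b / (u a + u b + D {a, b}) := by
  rw [h.2.2 {a, b} (pair_ne hab) b (by simp), Finset.sum_pair hab]

lemma defer_pair (h : IsDCL ρ u D) {a b : X} (hab : a ≠ b) :
    defer ρ {a, b} = D {a, b} / (u a + u b + D {a, b}) := by
  have hd := den_pair_pos h hab
  unfold defer
  rw [Finset.sum_pair hab, rho_pair_left h hab, rho_pair_right h hab]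
  field_simp
  ring

lemma ratio_left (h : IsDCL ρ u D) {a b : X} (hab : a ≠ b) :
    defer ρ {a, b} / ρ {a, b} a = D {a, b} / u a := by
  have hd := den_pair_pos h hab
  have hu := h.1 a
  rw [defer_pair h hab, rho_pair_left h hab]
  field_simp

lemma ratio_right (h : IsDCL ρ u D) {a b : X} (hab : a ≠ b) :
    defer ρ {a, b} / ρ {a, b} b = D {a, b} / u b := by
  have hd := den_pair_pos h hab
  have hu := h.1 b
  rw [defer_pair h hab, rho_pair_right h hab]
  field_simp

lemma pair_gt_iff (h : IsDCL ρ u D) {a b : X} (hab : a ≠ b) :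
    ρ {a, b} a > ρ {a, b} b ↔ u b < u a := by
  have hd := den_pair_pos h hab
  rw [rho_pair_left h hab, rho_pair_right h hab]
  exact div_lt_div_iff_of_pos_right hd

lemma key3 (h : IsDCL ρ u D) (h8 : A8 ρ) {a b c : X}
    (hab : a ≠ b) (hbc : b ≠ c) (hac : a ≠ c)
    (h1 : u b < u a) (h2 : u c < u b) :
    D {a, b} * (u a - u b) = D {a, c} * (u a - u c) ∧
    D {b, c} * (u b - u c) = D {a, b} * (u a - u b) := by
  have h3 : u c < u a := h2.trans h1
  obtain ⟨E1, E2⟩ := h8 a b c hab hbc hac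
    ((pair_gt_iff h hab).mpr h1) ((pair_gt_iff h hbc).mpr h2) ((pair_gt_iff h hac).mpr h3)
  simp only [defer_pair h hab, defer_pair h hac, defer_pair h hbc,
    rho_pair_left h hac, rho_pair_right h hac, rho_pair_left h hab, rho_pair_right h hab,
    rho_pair_left h hbc, rho_pair_right h hbc] at E1 E2
  have hua := h.1 a
  have hub := h.1 b
  have huc := h.1 c
  have hDab := D_pair_pos h hab
  have hDbc := D_pair_pos h hbc
  have hDac := D_pair_pos h hac
  have hdab := den_pair_pos h hab
  have hdac := den_pair_pos h hac
  have hdbc := den_pair_pos h hbc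
  have e1 : u a - u b ≠ 0 := sub_ne_zero.mpr h1.ne'
  have e2 : u a - u c ≠ 0 := sub_ne_zero.mpr h3.ne'
  have e3 : u b - u c ≠ 0 := sub_ne_zero.mpr h2.ne'
  -- E2 gives the first equality
  have key2 : D {a, b} * (u a - u b) = D {a, c} * (u a - u c) := by
    field_simp at E2
    nlinarith [E2]
  refine ⟨key2, ?_⟩
  -- E1 : Dab/Dbc = (Dab - Dac)/Dac after simplification
  have key1 : D {a, b} * D {a, c} = D {b, c} * (D {a, b} - D {a, c}) := by
    field_simp at E1
    linear_combination E1
  -- combine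
  have hcomb : D {a, b} * (D {b, c} * (u b - u c)) = D {a, b} * (D {a, b} * (u a - u b)) := by
    linear_combination (-(u a - u c)) * key1 + (-(D {b, c} + D {a, b})) * key2
  exact mul_left_cancel₀ hDab.ne' hcomb

lemma tri (h : IsDCL ρ u D) (h8 : A8 ρ) {x y z : X}
    (hxy : x ≠ y) (hyz : y ≠ z) (hxz : x ≠ z) (o1 : u y < u x) (o2 : u z < u y) :
    D {x, y} * |u x - u y| = D {x, z} * |u x - u z| ∧
    D {y, z} * |u y - u z| = D {x, y} * |u x - u y| := by
  obtain ⟨k1, k2⟩ := key3 h h8 hxy hyz hxz o1 o2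
  rw [abs_of_pos (sub_pos.mpr o1), abs_of_pos (sub_pos.mpr o2),
    abs_of_pos (sub_pos.mpr (o2.trans o1))]
  exact ⟨k1, k2⟩

lemma gs (u : X → ℝ) (D : Finset X → ℝ) (x y : X) :
    D {x, y} * |u x - u y| = D {y, x} * |u y - u x| := by
  rw [pair_comm, abs_sub_comm]

lemma gshare (h : IsDCL ρ u D) (h8 : A8 ρ) (hinj : Function.Injective u) {a b c : X}
    (hab : a ≠ b) (hbc : b ≠ c) (hac : a ≠ c) :
    D {a, b} * |u a - u b| = D {a, c} * |u a - u c| := by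
  have nab : u a ≠ u b := hinj.ne hab
  have nbc : u b ≠ u c := hinj.ne hbc
  have nac : u a ≠ u c := hinj.ne hac
  rcases nab.lt_or_gt with h1 | h1 <;> rcases nbc.lt_or_gt with h2 | h2 <;>
    rcases nac.lt_or_gt with h3 | h3
  · obtain ⟨k1, k2⟩ := tri h h8 hbc.symm hab.symm hac.symm h2 h1
    linarith [gs u D a b, gs u D a c, gs u D b c]
  · linarith
  · obtain ⟨k1, k2⟩ := tri h h8 hbc hac.symm hab.symm h2 h3
    linarith [gs u D a b, gs u D a c, gs u D b c]
  · obtain ⟨k1, k2⟩ := tri h h8 hab.symm hac hbc h1 h3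
    linarith [gs u D a b, gs u D a c, gs u D b c]
  · obtain ⟨k1, k2⟩ := tri h h8 hac.symm hab hbc.symm h3 h1
    linarith [gs u D a b, gs u D a c, gs u D b c]
  · obtain ⟨k1, k2⟩ := tri h h8 hac hbc.symm hab h3 h2
    linarith [gs u D a b, gs u D a c, gs u D b c]
  · linarith
  · obtain ⟨k1, k2⟩ := tri h h8 hab hbc hac h1 h2
    linarith [gs u D a b, gs u D a c, gs u D b c]

lemma gconst (h : IsDCL ρ u D) (h8 : A8 ρ) (hinj : Function.Injective u)
    (a b c d : X) (hab : a ≠ b) (hcd : c ≠ d) :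
    D {a, b} * |u a - u b| = D {c, d} * |u c - u d| := by
  by_cases h1 : a = c
  · subst h1
    by_cases h2 : b = d
    · subst h2; rfl
    · exact gshare h h8 hinj hab h2 hcd
  · by_cases h2 : a = d
    · subst h2
      by_cases h3 : b = c
      · subst h3; exact gs u D a b
      · calc D {a, b} * |u a - u b| = D {a, c} * |u a - u c| :=
              gshare h h8 hinj hab h3 (Ne.symm hcd)
          _ = D {c, a} * |u c - u a| := gs u D a c
    · by_cases h3 : b = c
      · subst h3
        calc D {a, b} * |u a - u b| = D {b, a} * |u b - u a| := gs u D a b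
          _ = D {b, d} * |u b - u d| := gshare h h8 hinj hab.symm h2 hcd
      · by_cases h4 : b = d
        · subst h4
          calc D {a, b} * |u a - u b| = D {b, a} * |u b - u a| := gs u D a b
            _ = D {b, c} * |u b - u c| := gshare h h8 hinj hab.symm h1 h3
            _ = D {c, b} * |u c - u b| := gs u D b c
        · calc D {a, b} * |u a - u b| = D {a, c} * |u a - u c| := gshare h h8 hinj hab h3 h1
            _ = D {c, a} * |u c - u a| := gs u D a c
            _ = D {c, d} * |u c - u d| := gshare h h8 hinj (Ne.symm h1) h2 hcd

end Aux

/-- A decision-conflict logit is a reciprocal-differences model iff it satisfies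
Axioms A7 and A8. -/
theorem stmt16 (hX : 1 < Fintype.card X) (ρ : Finset X → X → ℝ) (hρ : IsRNFC ρ)
    (u : X → ℝ) (D : Finset X → ℝ) (h : IsDCL ρ u D) :
    (Function.Injective u ∧
        ∃ l > 0, ∀ a b : X, a ≠ b → D {a, b} = l / |u a - u b|)
      ↔ (A7 ρ ∧ A8 ρ) := by
  constructor
  · rintro ⟨hinj, l, hl, hD⟩
    constructor
    · -- A7
      intro A hA a ha b hb hab
      have hs : 0 < ∑ x ∈ A, u x := Finset.sum_pos (fun x _ => h.1 x) hA
      have hden : ((∑ x ∈ A, u x) + D A) ≠ 0 := by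
        have := (h.2.1 A hA).1; positivity
      rw [h.2.2 A hA a ha, h.2.2 A hA b hb]
      intro heq
      rw [div_eq_div_iff hden hden] at heq
      exact hab (hinj (mul_right_cancel₀ hden heq))
    · -- A8
      intro a b c hab hbc hac g1 g2 g3
      have o1 : u b < u a := (pair_gt_iff h hab).mp g1
      have o2 : u c < u b := (pair_gt_iff h hbc).mp g2
      have o3 : u c < u a := o2.trans o1
      have Dab : D {a, b} = l / (u a - u b) := by
        rw [hD a b hab, abs_of_pos (sub_pos.mpr o1)]
      have Dac : D {a, c} = l / (u a - u c) := by
        rw [hD a c hac, abs_of_pos (sub_pos.mpr o3)]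
      have Dbc : D {b, c} = l / (u b - u c) := by
        rw [hD b c hbc, abs_of_pos (sub_pos.mpr o2)]
      have hua := h.1 a
      have hub := h.1 b
      have huc := h.1 c
      have hdab := (den_pair_pos h hab).ne'
      have hdac := (den_pair_pos h hac).ne'
      have hdbc := (den_pair_pos h hbc).ne'
      have e1 : u a - u b ≠ 0 := sub_ne_zero.mpr o1.ne'
      have e2 : u a - u c ≠ 0 := sub_ne_zero.mpr o3.ne'
      have e3 : u b - u c ≠ 0 := sub_ne_zero.mpr o2.ne'
      constructor
      · rw [ratio_right h hab, ratio_left h hbc, ratio_left h hab, ratio_left h hac,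
          Dab, Dac, Dbc]
        field_simp
        ring
      · have T1 : (ρ {a, c} a - ρ {a, c} c) / ρ {a, c} a = (u a - u c) / u a := by
          rw [rho_pair_left h hac, rho_pair_right h hac, div_sub_div_same]
          rw [div_div_div_cancel_right₀ hdac]
        have T2 : (ρ {a, b} a - ρ {a, b} b) / ρ {a, b} a = (u a - u b) / u a := by
          rw [rho_pair_left h hab, rho_pair_right h hab, div_sub_div_same]
          rw [div_div_div_cancel_right₀ hdab]
        rw [ratio_left h hab, ratio_left h hac, T1, T2, Dab, Dac]
        field_simp
  · rintro ⟨h7, h8⟩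
    have hinj : Function.Injective u := by
      intro a b heq
      by_contra hne
      refine h7 {a, b} (pair_ne hne) a (mem_insert_self _ _) b (by simp) hne ?_
      rw [rho_pair_left h hne, rho_pair_right h hne, heq]
    obtain ⟨a0, b0, hab0⟩ := Fintype.exists_pair_of_one_lt_card hX
    have hl : 0 < D {a0, b0} * |u a0 - u b0| :=
      mul_pos (D_pair_pos h hab0) (abs_pos.mpr (sub_ne_zero.mpr (hinj.ne hab0)))
    refine ⟨hinj, D {a0, b0} * |u a0 - u b0|, hl, fun a b hab => ?_⟩
    have hg := gconst h h8 hinj a b a0 b0 hab hab0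
    have habs : |u a - u b| ≠ 0 := abs_ne_zero.mpr (sub_ne_zero.mpr (hinj.ne hab))
    rw [eq_div_iff habs, hg]
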